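/- Suppose for each k the function f_{k+1}(t,x,v) is given by the iteration f_{k+1}(t,x,v) = c₀ χ₁(x − t v) χ₂(v) + χ₂(v) G[f_k](t,x,v), where G[f](t,x,v) depends on f only through values f(τ, x − (t−τ)v, ζ) with 0 ≤ τ ≤ t and |ζ| ≤ c₂, and f₀ = 0. If χ₁ is the characteristic function of {|x| ≤ c₁} and χ₂ of {|v| ≤ c₂}, and G commutes with spatial translations in its argument, then for every k and every t ∈ [0,T] with T c₂ < c₁: for all |x|, |y| ≤ c₁ − t c₂ and all v, f_k(t,x,v) = f_k(t,y,v). -/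
import Mathlib


noncomputable abbrev E3 := EuclideanSpace ℝ (Fin 3)

/-- Lemma 5 (abstract form): for the Kaniel–Shinbrot iteration
`f_{k+1}(t,x,v) = c₀ χ₁(x - t v) χ₂(v) + χ₂(v) G[f_k](t,x,v)`, with `f₀ = 0`,
where `G` depends on its argument only through values along backward
characteristics with truncated velocities and is translation invariant in `x`,
each iterate is independent of `x` on the shrinking ball `|x| ≤ c₁ - t c₂`. -/
theorem iterates_spatially_homogeneous (c₀ c₁ c₂ T : ℝ)
    (hc₀ : 0 < c₀) (hc₁ : 0 < c₁) (hc₂ : 0 < c₂) (hT : 0 < T)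
    (hTc : T * c₂ < c₁)
    (G : (ℝ → E3 → E3 → ℝ) → (ℝ → E3 → E3 → ℝ))
    (hG : ∀ (f : ℝ → E3 → E3 → ℝ) (t : ℝ) (x y v : E3),
      (∀ τ ∈ Set.Icc (0:ℝ) t, ∀ ζ : E3, ‖ζ‖ ≤ c₂ →
        f τ (x - (t - τ) • v) ζ = f τ (y - (t - τ) • v) ζ) →
      G f t x v = G f t y v)
    (f : ℕ → ℝ → E3 → E3 → ℝ)
    (hf0 : ∀ t x v, f 0 t x v = 0)
    (hiter : ∀ k t x v, f (k+1) t x v =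
      c₀ * Set.indicator (Metric.closedBall (0:E3) c₁) (fun _ => (1:ℝ)) (x - t • v) *
        Set.indicator (Metric.closedBall (0:E3) c₂) (fun _ => (1:ℝ)) v +
      Set.indicator (Metric.closedBall (0:E3) c₂) (fun _ => (1:ℝ)) v * G (f k) t x v) :
    ∀ k, ∀ t ∈ Set.Icc (0:ℝ) T, ∀ x y v : E3,
      ‖x‖ ≤ c₁ - t * c₂ → ‖y‖ ≤ c₁ - t * c₂ → f k t x v = f k t y v := by
  intro k
  induction k with
  | zero => intro t _ x y v _ _; simp [hf0]
  | succ k ih =>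
    intro t ht x y v hx hy
    rw [hiter, hiter]
    by_cases hv : ‖v‖ ≤ c₂
    · -- both first indicators equal 1
      have hmem : ∀ z : E3, ‖z‖ ≤ c₁ - t * c₂ → z - t • v ∈ Metric.closedBall (0:E3) c₁ := by
        intro z hz
        rw [Metric.mem_closedBall, dist_zero_right]
        calc ‖z - t • v‖ ≤ ‖z‖ + ‖t • v‖ := norm_sub_le _ _
          _ ≤ (c₁ - t * c₂) + t * c₂ := by
              refine add_le_add hz ?_
              rw [norm_smul, Real.norm_eq_abs, abs_of_nonneg ht.1]
              exact mul_le_mul_of_nonneg_left hv ht.1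
          _ = c₁ := by ring
      rw [Set.indicator_of_mem (hmem x hx), Set.indicator_of_mem (hmem y hy)]
      have hGeq : G (f k) t x v = G (f k) t y v := by
        apply hG
        intro τ hτ ζ hζ
        have hτT : τ ∈ Set.Icc (0:ℝ) T := ⟨hτ.1, hτ.2.trans ht.2⟩
        have hbound : ∀ z : E3, ‖z‖ ≤ c₁ - t * c₂ →
            ‖z - (t - τ) • v‖ ≤ c₁ - τ * c₂ := by
          intro z hz
          calc ‖z - (t - τ) • v‖ ≤ ‖z‖ + ‖(t - τ) • v‖ := norm_sub_le _ _
            _ ≤ (c₁ - t * c₂) + (t - τ) * c₂ := by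
                refine add_le_add hz ?_
                rw [norm_smul, Real.norm_eq_abs, abs_of_nonneg (by linarith [hτ.2])]
                exact mul_le_mul_of_nonneg_left hv (by linarith [hτ.2])
            _ = c₁ - τ * c₂ := by ring
        exact ih τ hτT _ _ ζ (hbound x hx) (hbound y hy)
      rw [hGeq]
    · have : v ∉ Metric.closedBall (0:E3) c₂ := by
        rw [Metric.mem_closedBall, dist_zero_right]; exact hv
      rw [Set.indicator_of_notMem this]
      ring
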